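/- Let β > 0 and define h(x₃,x₄) := ln 2 - ln x₃ - ln(x₃ + βx₄) on the open set O = {(x₃,x₄) ∈ ℝ² : x₃ > 0, x₄ > 0} (so that h = ln|τ| for the scalar curvature τ(x₃,x₄) = -2 x₃^{-1}(x₃+βx₄)^{-1}). Then on O the second partial derivatives of h satisfy ∂²h/∂x₃² = x₃^{-2} + (x₃+βx₄)^{-2}, ∂²h/∂x₃∂x₄ = β(x₃+βx₄)^{-2}, ∂²h/∂x₄² = β²(x₃+βx₄)^{-2}, and the determinant of the Hessian matrix of h equals β² x₃^{-2}(x₃+βx₄)^{-2}; in particular, this determinant determines β, so that manifolds M_{β₁} and M_{β₂} with β₁ ≠ β₂ are not isometric. -/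

import Mathlib

/-- For `β > 0` let `h(x₃,x₄) = ln 2 - ln x₃ - ln (x₃ + β x₄)` on
`O = {x₃ > 0, x₄ > 0}` (so `h = ln |τ|` for the scalar curvature
`τ = -2 x₃⁻¹ (x₃ + β x₄)⁻¹` of the manifold `M_β`).  Then on `O` one has
`∂²h/∂x₃² = x₃⁻² + (x₃+βx₄)⁻²`, `∂²h/∂x₃∂x₄ = β (x₃+βx₄)⁻²`,
`∂²h/∂x₄² = β² (x₃+βx₄)⁻²`, and the determinant of the Hessian of `h` equals
`β² x₃⁻² (x₃+βx₄)⁻²`; in particular this determinant determines `β` (so the manifolds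
`M_{β₁}` and `M_{β₂}` are not isometric for `β₁ ≠ β₂`). -/
theorem hessian_log_scalar_curvature
    (β : ℝ) (hβ : 0 < β)
    (h : ℝ → ℝ → ℝ)
    (hh : ∀ a b : ℝ, h a b = Real.log 2 - Real.log a - Real.log (a + β * b)) :
    (∀ a b : ℝ, 0 < a → 0 < b →
      deriv (fun a' => deriv (fun a'' => h a'' b) a') a =
        a⁻¹ ^ 2 + (a + β * b)⁻¹ ^ 2) ∧
    (∀ a b : ℝ, 0 < a → 0 < b →
      deriv (fun b' => deriv (fun a' => h a' b') a) b = β * (a + β * b)⁻¹ ^ 2) ∧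
    (∀ a b : ℝ, 0 < a → 0 < b →
      deriv (fun b' => deriv (fun b'' => h a b'') b') b = β ^ 2 * (a + β * b)⁻¹ ^ 2) ∧
    (∀ a b : ℝ, 0 < a → 0 < b →
      (deriv (fun a' => deriv (fun a'' => h a'' b) a') a) *
          (deriv (fun b' => deriv (fun b'' => h a b'') b') b) -
        (deriv (fun b' => deriv (fun a' => h a' b') a) b) *
          (deriv (fun a' => deriv (fun b' => h a' b') b) a) =
        β ^ 2 * a⁻¹ ^ 2 * (a + β * b)⁻¹ ^ 2) ∧
    (∀ β' : ℝ, 0 < β' →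
      (∀ a b : ℝ, 0 < a → 0 < b →
        β ^ 2 * a⁻¹ ^ 2 * (a + β * b)⁻¹ ^ 2 =
          β' ^ 2 * a⁻¹ ^ 2 * (a + β' * b)⁻¹ ^ 2) →
      β = β') := by
  -- first derivative in the first variable
  have key1 : ∀ a b : ℝ, 0 < a → 0 < a + β * b →
      HasDerivAt (fun a'' => h a'' b) (-a⁻¹ - (a + β * b)⁻¹) a := by
    intro a b ha hab
    have h1 : HasDerivAt (fun x : ℝ => Real.log x) a⁻¹ a := Real.hasDerivAt_log ha.ne'
    have h2 : HasDerivAt (fun x : ℝ => Real.log (x + β * b)) (a + β * b)⁻¹ a := by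
      have := (Real.hasDerivAt_log hab.ne').comp a ((hasDerivAt_id a).add_const (β * b))
      simpa [Function.comp_def] using this
    have h3 := ((hasDerivAt_const a (Real.log 2)).fun_sub h1).fun_sub h2
    have : (fun a'' => h a'' b) = fun x => Real.log 2 - Real.log x - Real.log (x + β * b) := by
      funext x; rw [hh]
    rw [this]
    convert (show HasDerivAt (fun x => Real.log 2 - Real.log x - Real.log (x + β * b)) _ a from h3) using 1; ring
  -- first derivative in the second variable
  have key2 : ∀ a b : ℝ, 0 < a → 0 < a + β * b →
      HasDerivAt (fun b' => h a b') (-(β * (a + β * b)⁻¹)) b := by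
    intro a b ha hab
    have h2 : HasDerivAt (fun y : ℝ => Real.log (a + β * y)) ((a + β * b)⁻¹ * β) b := by
      have := (Real.hasDerivAt_log hab.ne').comp b
        (((hasDerivAt_id b).const_mul β).const_add a)
      simpa [Function.comp_def] using this
    have h3 := ((hasDerivAt_const b (Real.log 2 - Real.log a)).fun_sub h2)
    have : (fun b' => h a b') = fun y => (Real.log 2 - Real.log a) - Real.log (a + β * y) := by
      funext y; rw [hh]
    rw [this]
    convert (show HasDerivAt (fun y => (Real.log 2 - Real.log a) - Real.log (a + β * y)) _ b from h3) using 1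
    all_goals ring
  have pab : ∀ a b : ℝ, 0 < a → 0 < b → 0 < a + β * b := by
    intro a b ha hb; positivity
  -- d²/da²
  have H1 : ∀ a b : ℝ, 0 < a → 0 < b →
      deriv (fun a' => deriv (fun a'' => h a'' b) a') a = a⁻¹ ^ 2 + (a + β * b)⁻¹ ^ 2 := by
    intro a b ha hb
    have ev : (fun a' => deriv (fun a'' => h a'' b) a') =ᶠ[nhds a]
        (fun a' => -a'⁻¹ - (a' + β * b)⁻¹) := by
      filter_upwards [eventually_gt_nhds ha] with x hx
      exact (key1 x b hx (pab x b hx hb)).deriv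
    rw [ev.deriv_eq]
    have hab := pab a b ha hb
    have i1 : HasDerivAt (fun x : ℝ => x⁻¹) (-(a ^ 2)⁻¹) a := hasDerivAt_inv ha.ne'
    have i2 : HasDerivAt (fun x : ℝ => (x + β * b)⁻¹) (-((a + β * b) ^ 2)⁻¹) a := by
      have := (hasDerivAt_inv hab.ne').comp a ((hasDerivAt_id a).add_const (β * b))
      simpa [Function.comp_def] using this
    have := (i1.fun_neg.fun_sub i2).deriv
    rw [this]
    rw [inv_pow, inv_pow]; ring
  -- mixed: d/db of d/da
  have H2 : ∀ a b : ℝ, 0 < a → 0 < b →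
      deriv (fun b' => deriv (fun a' => h a' b') a) b = β * (a + β * b)⁻¹ ^ 2 := by
    intro a b ha hb
    have ev : (fun b' => deriv (fun a' => h a' b') a) =ᶠ[nhds b]
        (fun b' => -a⁻¹ - (a + β * b')⁻¹) := by
      filter_upwards [eventually_gt_nhds hb] with y hy
      exact (key1 a y ha (pab a y ha hy)).deriv
    rw [ev.deriv_eq]
    have hab := pab a b ha hb
    have i2 : HasDerivAt (fun y : ℝ => (a + β * y)⁻¹) (-((a + β * b) ^ 2)⁻¹ * β) b := by
      have := (hasDerivAt_inv hab.ne').comp b (((hasDerivAt_id b).const_mul β).const_add a)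
      simpa [Function.comp_def] using this
    have := ((hasDerivAt_const b (-a⁻¹)).fun_sub i2).deriv
    have e : (fun b' : ℝ => -a⁻¹ - (a + β * b')⁻¹)
        = (fun b' : ℝ => (-a⁻¹) - (fun y : ℝ => (a + β * y)⁻¹) b') := rfl
    rw [e, this, inv_pow]; ring
  -- d²/db²
  have H3 : ∀ a b : ℝ, 0 < a → 0 < b →
      deriv (fun b' => deriv (fun b'' => h a b'') b') b = β ^ 2 * (a + β * b)⁻¹ ^ 2 := by
    intro a b ha hb
    have ev : (fun b' => deriv (fun b'' => h a b'') b') =ᶠ[nhds b]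
        (fun b' => -(β * (a + β * b')⁻¹)) := by
      filter_upwards [eventually_gt_nhds hb] with y hy
      exact (key2 a y ha (pab a y ha hy)).deriv
    rw [ev.deriv_eq]
    have hab := pab a b ha hb
    have i2 : HasDerivAt (fun y : ℝ => (a + β * y)⁻¹) (-((a + β * b) ^ 2)⁻¹ * β) b := by
      have := (hasDerivAt_inv hab.ne').comp b (((hasDerivAt_id b).const_mul β).const_add a)
      simpa [Function.comp_def] using this
    have := ((i2.const_mul β).fun_neg).deriv
    have e : (fun b' : ℝ => -(β * (a + β * b')⁻¹))
        = (fun b' : ℝ => -(β * (fun y : ℝ => (a + β * y)⁻¹) b')) := rfl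
    rw [e, this, inv_pow]; ring
  -- other mixed: d/da of d/db
  have H4 : ∀ a b : ℝ, 0 < a → 0 < b →
      deriv (fun a' => deriv (fun b' => h a' b') b) a = β * (a + β * b)⁻¹ ^ 2 := by
    intro a b ha hb
    have ev : (fun a' => deriv (fun b' => h a' b') b) =ᶠ[nhds a]
        (fun a' => -(β * (a' + β * b)⁻¹)) := by
      filter_upwards [eventually_gt_nhds ha] with x hx
      exact (key2 x b hx (pab x b hx hb)).deriv
    rw [ev.deriv_eq]
    have hab := pab a b ha hb
    have i2 : HasDerivAt (fun x : ℝ => (x + β * b)⁻¹) (-((a + β * b) ^ 2)⁻¹) a := by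
      have := (hasDerivAt_inv hab.ne').comp a ((hasDerivAt_id a).add_const (β * b))
      simpa [Function.comp_def] using this
    have := ((i2.const_mul β).fun_neg).deriv
    have e : (fun a' : ℝ => -(β * (a' + β * b)⁻¹))
        = (fun a' : ℝ => -(β * (fun x : ℝ => (x + β * b)⁻¹) a')) := rfl
    rw [e, this, inv_pow]; ring
  refine ⟨H1, H2, H3, ?_, ?_⟩
  · intro a b ha hb
    rw [H1 a b ha hb, H2 a b ha hb, H3 a b ha hb, H4 a b ha hb]
    have hab := (pab a b ha hb).ne'
    field_simp
    ring
  · intro β' hβ' heq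
    have := heq 1 1 one_pos one_pos
    simp only [mul_one] at this
    have h1 : (0:ℝ) < 1 + β := by linarith
    have h2 : (0:ℝ) < 1 + β' := by linarith
    field_simp at this
    nlinarith [mul_pos hβ hβ', sq_nonneg (β - β'), sq_nonneg (β + β')]
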